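/- Let G be a gyrogroup and H an L-subgyrogroup of G. Then the family of left cosets {a ⊕ H : a ∈ G} forms a disjoint partition of G; that is, every element of G lies in exactly one left coset of H. -/
import Mathlib


open Set Topology

universe u

class Gyrogroup (G : Type u) where
  op : G → G → G
  one : G
  inv : G → G
  gyr : G → G → G ≃ G
  one_op : ∀ g, op one g = g
  op_one : ∀ g, op g one = g
  inv_op : ∀ g, op (inv g) g = one
  op_inv : ∀ g, op g (inv g) = one
  unique_one : ∀ e : G, (∀ g, op e g = g ∧ op g e = g) → e = one
  unique_inv : ∀ g h : G, (op h g = one ∧ op g h = one) → h = inv g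
  gyr_op : ∀ g h f, op g (op h f) = op (op g h) (gyr g h f)
  gyr_hom : ∀ g h a b, gyr g h (op a b) = op (gyr g h a) (gyr g h b)
  loop : ∀ g h, gyr g h = gyr (op g h) h

namespace Gyrogroup

variable {G : Type u} [Gyrogroup G]

/-- `H` is a subgyrogroup: nonempty and a gyrogroup under the restricted operations. -/
def IsSubgyrogroup (H : Set G) : Prop :=
  H.Nonempty ∧ one ∈ H ∧
  (∀ a ∈ H, ∀ b ∈ H, op a b ∈ H) ∧
  (∀ a ∈ H, inv a ∈ H) ∧
  (∀ a ∈ H, ∀ b ∈ H, Set.BijOn (gyr a b) H H)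

/-- `H` is an L-subgyrogroup: `gyr g h` fixes `H` setwise for every `g ∈ G`, `h ∈ H`. -/
def IsLSubgyrogroup (H : Set G) : Prop :=
  IsSubgyrogroup H ∧ ∀ g : G, ∀ h ∈ H, (gyr g h) '' H = H

def leftCoset (a : G) (H : Set G) : Set G := (fun h => op a h) '' H

/-- The subgyrogroup generated by `S`. -/
def generatedSubgyrogroup (S : Set G) : Set G :=
  ⋂₀ {H : Set G | IsSubgyrogroup H ∧ S ⊆ H}

/-- The gyrogroup operations are continuous (topological gyrogroup). -/
def ContinuousGyroOps (G : Type u) [Gyrogroup G] [TopologicalSpace G] : Prop :=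
  Continuous (fun p : G × G => op p.1 p.2) ∧ Continuous (inv : G → G)

/-- The topology coincides with the order topology of some linear order. -/
def TopologicallyOrderable (G : Type u) [t : TopologicalSpace G] : Prop :=
  ∃ l : LinearOrder G, t = TopologicalSpace.generateFrom
      {s : Set G | ∃ a : G, s = {x | l.lt a x} ∨ s = {x | l.lt x a}}

/-- A strongly topological gyrogroup: a topological gyrogroup with a neighborhood base
at `1` whose members are invariant under all gyroautomorphisms. -/
def StronglyTopologicalGyrogroup (G : Type u) [Gyrogroup G] [TopologicalSpace G] : Prop :=
  ContinuousGyroOps G ∧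
  ∃ 𝒰 : Set (Set G), (∀ U ∈ 𝒰, U ∈ nhds (one : G)) ∧
    (∀ V ∈ nhds (one : G), ∃ U ∈ 𝒰, U ⊆ V) ∧
    (∀ U ∈ 𝒰, ∀ x y : G, (gyr x y) '' U = U)

def StronglyTopologicallyOrderable (G : Type u) [Gyrogroup G] [TopologicalSpace G] : Prop :=
  StronglyTopologicalGyrogroup G ∧ TopologicallyOrderable G

end Gyrogroup

open Gyrogroup

namespace GyroAux

variable {G : Type u} [Gyrogroup G]

lemma gyr_one (g h : G) : gyr g h (one : G) = one := by
  have h1 : ∀ a : G, gyr g h a = op (gyr g h a) (gyr g h (one : G)) := by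
    intro a
    calc gyr g h a = gyr g h (op a one) := by rw [op_one]
    _ = op (gyr g h a) (gyr g h (one : G)) := gyr_hom g h a one
  have h2 := h1 ((gyr g h).symm (one : G))
  rw [Equiv.apply_symm_apply] at h2
  rw [one_op] at h2
  exact h2.symm

lemma op_left_cancel {a x y : G} (h : op a x = op a y) : x = y := by
  have : op (inv a) (op a x) = op (inv a) (op a y) := by rw [h]
  rw [gyr_op, gyr_op, inv_op, one_op, one_op] at this
  exact (gyr (inv a) a).injective this

lemma gyr_one_left (h f : G) : gyr (one : G) h f = f := by
  apply op_left_cancel (a := h)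
  have := gyr_op (one : G) h f
  rw [one_op, one_op] at this
  exact this.symm

lemma gyr_inv_self (a f : G) : gyr (inv a) a f = f := by
  have := loop (inv a) a
  rw [inv_op] at this
  rw [this, gyr_one_left]

lemma gyr_self_inv (a f : G) : gyr a (inv a) f = f := by
  have := loop a (inv a)
  rw [op_inv] at this
  rw [this, gyr_one_left]

lemma inv_op_cancel (a x : G) : op (inv a) (op a x) = x := by
  rw [gyr_op, inv_op, one_op, gyr_inv_self]

lemma op_inv_cancel (a x : G) : op a (op (inv a) x) = x := by
  rw [gyr_op, op_inv, one_op, gyr_self_inv]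

/-- If `x ∈ a ⊕ H` then `a ⊕ H = x ⊕ H`. -/
lemma coset_eq_of_mem (H : Set G) (hH : IsLSubgyrogroup H) {a x : G}
    (hx : x ∈ leftCoset a H) : leftCoset a H = leftCoset x H := by
  obtain ⟨⟨_, h1, hcl, hinv, _⟩, hL⟩ := hH
  obtain ⟨h, hhH, rfl⟩ := hx
  apply Set.Subset.antisymm
  · rintro _ ⟨h', hh'H, rfl⟩
    -- a ⊕ h' = (a ⊕ h) ⊕ gyr a h (⊖h ⊕ h')
    refine ⟨gyr a h (op (inv h) h'), ?_, ?_⟩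
    · rw [← hL a h hhH]
      exact ⟨op (inv h) h', hcl _ (hinv h hhH) _ hh'H, rfl⟩
    · show op (op a h) (gyr a h (op (inv h) h')) = op a h'
      rw [← gyr_op, op_inv_cancel]
  · rintro _ ⟨h', hh'H, rfl⟩
    -- (a ⊕ h) ⊕ h' : write h' = gyr a h h'' with h'' ∈ H
    have : h' ∈ gyr a h '' H := by rw [hL a h hhH]; exact hh'H
    obtain ⟨h'', hh''H, rfl⟩ := this
    refine ⟨op h h'', hcl _ hhH _ hh''H, ?_⟩
    show op a (op h h'') = op (op a h) (gyr a h h'')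
    exact gyr_op a h h''

end GyroAux

open GyroAux
/-- The left cosets of an L-subgyrogroup form a disjoint partition: every element
lies in exactly one left coset. -/
theorem stmt1 {G : Type u} [Gyrogroup G] (H : Set G) (hH : IsLSubgyrogroup H) :
    ∀ x : G, ∃! C : Set G, (∃ a : G, C = leftCoset a H) ∧ x ∈ C := by
  intro x
  refine ⟨leftCoset x H, ⟨⟨x, rfl⟩, ⟨one, hH.1.2.1, op_one x⟩⟩, ?_⟩
  rintro C ⟨⟨a, rfl⟩, hxC⟩
  exact coset_eq_of_mem H hH hxC
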